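/- Let Φ ∈ ℝ^{m×n}, y ∈ ℝᵐ with y ≠ 0, z ∈ ℝⁿ, λ > 0 and C ≥ 0, and let g(x) = T(Φx, y) + λ‖x − z‖₂². Then the gradient of g satisfies ∇g(x) = (2/r(x)) f(x) for all x ∈ ℝⁿ, where r(x) = ‖Φx‖₂² + ‖y‖₂² + C, s(x) = 1 − T(Φx,y), and f(x) = [s(x)ΦᵀΦ + λ r(x) I] x − λ r(x) z − Φᵀy. Consequently, x* is a critical point of g if and only if f(x*) = 0. -/

import Mathlib

open Matrix
open scoped RealInnerProductSpace

/-- For `g(x) = T(Φx,y) + λ‖x-z‖²`, the gradient satisfies `∇g(x) = (2/r(x)) f(x)`,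
where `r(x) = ‖Φx‖² + ‖y‖² + C`, `s(x) = 1 - T(Φx,y)` and
`f(x) = [s(x)ΦᵀΦ + λ r(x) I]x - λ r(x) z - Φᵀy`; consequently `x*` is a critical
point of `g` iff `f(x*) = 0`. -/
theorem gradient_eq_two_div_r_smul_f {m n : ℕ} (Φ : Matrix (Fin m) (Fin n) ℝ)
    (y : EuclideanSpace ℝ (Fin m)) (hy : y ≠ 0) (z : EuclideanSpace ℝ (Fin n))
    (lam C : ℝ) (hlam : 0 < lam) (hC : 0 ≤ C)
    (r : EuclideanSpace ℝ (Fin n) → ℝ)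
    (hr : ∀ x, r x = ‖Matrix.toEuclideanLin Φ x‖ ^ 2 + ‖y‖ ^ 2 + C)
    (s : EuclideanSpace ℝ (Fin n) → ℝ)
    (hs : ∀ x, s x = 1 - ‖Matrix.toEuclideanLin Φ x - y‖ ^ 2 / r x)
    (f : EuclideanSpace ℝ (Fin n) → EuclideanSpace ℝ (Fin n))
    (hf : ∀ x, f x = s x • Matrix.toEuclideanLin (Φᵀ * Φ) x + (lam * r x) • x
        - (lam * r x) • z - Matrix.toEuclideanLin Φᵀ y)
    (g : EuclideanSpace ℝ (Fin n) → ℝ)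
    (hg : ∀ x, g x = ‖Matrix.toEuclideanLin Φ x - y‖ ^ 2 / r x + lam * ‖x - z‖ ^ 2) :
    (∀ x, gradient g x = (2 / r x) • f x) ∧
      (∀ x, gradient g x = 0 ↔ f x = 0) := by
  classical
  set A : EuclideanSpace ℝ (Fin n) →L[ℝ] EuclideanSpace ℝ (Fin m) :=
    LinearMap.toContinuousLinearMap (Matrix.toEuclideanLin Φ) with hA
  have hAx : ∀ v, Matrix.toEuclideanLin Φ v = A v := fun _ => rfl
  -- positivity of r
  have hrpos : ∀ x, 0 < r x := by
    intro x
    rw [hr x]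
    have h1 : 0 < ‖y‖ ^ 2 := pow_pos (norm_pos_iff.mpr hy) 2
    have h2 : 0 ≤ ‖Matrix.toEuclideanLin Φ x‖ ^ 2 := sq_nonneg _
    linarith
  have hrne : ∀ x, r x ≠ 0 := fun x => ne_of_gt (hrpos x)
  -- adjoint identity
  have hΦT : Φᵀ = Φᴴ := by
    ext i j
    simp [Matrix.conjTranspose_apply]
  have hadj : ∀ (w : EuclideanSpace ℝ (Fin m)) (h : EuclideanSpace ℝ (Fin n)),
      ⟪Matrix.toEuclideanLin Φᵀ w, h⟫ = ⟪w, A h⟫ := by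
    intro w h
    rw [hΦT, Matrix.toEuclideanLin_conjTranspose_eq_adjoint, LinearMap.adjoint_inner_left]
    rfl
  have hmul : ∀ x : EuclideanSpace ℝ (Fin n),
      Matrix.toEuclideanLin (Φᵀ * Φ) x = Matrix.toEuclideanLin Φᵀ (Matrix.toEuclideanLin Φ x) := by
    intro x
    simp [Matrix.toEuclideanLin_apply, Matrix.mulVec_mulVec]
  -- rewrite g
  have hgfun : g = fun x => ⟪A x - y, A x - y⟫ * (r x)⁻¹ + lam * ⟪x - z, x - z⟫ := by
    funext x
    rw [hg x, real_inner_self_eq_norm_sq, real_inner_self_eq_norm_sq, div_eq_mul_inv, hAx]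
  have hrfun : ∀ x, r x = ⟪A x, A x⟫ + (‖y‖ ^ 2 + C) := by
    intro x
    rw [hr x, real_inner_self_eq_norm_sq, hAx]
    ring
  have key : ∀ x, HasGradientAt g ((2 / r x) • f x) x := by
    intro x
    have hAy : HasFDerivAt (fun v => A v - y) (A : _ →L[ℝ] _) x := A.hasFDerivAt.sub_const y
    have hq : HasFDerivAt (fun v => ⟪A v - y, A v - y⟫)
        ((fderivInnerCLM ℝ (A x - y, A x - y)).comp ((A : _ →L[ℝ] _).prod A)) x :=
      hAy.inner ℝ hAy
    have hrD : HasFDerivAt r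
        ((fderivInnerCLM ℝ (A x, A x)).comp ((A : _ →L[ℝ] _).prod A)) x := by
      have : HasFDerivAt (fun v => ⟪A v, A v⟫ + (‖y‖ ^ 2 + C))
          ((fderivInnerCLM ℝ (A x, A x)).comp ((A : _ →L[ℝ] _).prod A)) x :=
        (A.hasFDerivAt.inner ℝ A.hasFDerivAt).add_const _
      exact this.congr_of_eventuallyEq (by filter_upwards with v using (hrfun v))
    have hinv : HasFDerivAt (fun v => (r v)⁻¹)
        ((-(r x ^ 2)⁻¹) • ((fderivInnerCLM ℝ (A x, A x)).comp ((A : _ →L[ℝ] _).prod A))) x :=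
      (hasDerivAt_inv (hrne x)).comp_hasFDerivAt x hrD
    have hid : HasFDerivAt (fun v : EuclideanSpace ℝ (Fin n) => v - z)
        (ContinuousLinearMap.id ℝ _) x := (hasFDerivAt_id x).sub_const z
    have hzz : HasFDerivAt (fun v => lam * ⟪v - z, v - z⟫)
        (lam • ((fderivInnerCLM ℝ (x - z, x - z)).comp
          ((ContinuousLinearMap.id ℝ _).prod (ContinuousLinearMap.id ℝ _)))) x :=
      (hid.inner ℝ hid).const_mul lam
    have hD : HasFDerivAt g
        ((⟪A x - y, A x - y⟫ • ((-(r x ^ 2)⁻¹) • ((fderivInnerCLM ℝ (A x, A x)).comp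
            ((A : _ →L[ℝ] _).prod A)))
          + (r x)⁻¹ • ((fderivInnerCLM ℝ (A x - y, A x - y)).comp ((A : _ →L[ℝ] _).prod A)))
          + lam • ((fderivInnerCLM ℝ (x - z, x - z)).comp
            ((ContinuousLinearMap.id ℝ _).prod (ContinuousLinearMap.id ℝ _)))) x := by
      rw [hgfun]
      exact (hq.mul hinv).add hzz
    rw [hasGradientAt_iff_hasFDerivAt]
    refine hD.congr_fderiv ?_
    apply ContinuousLinearMap.ext
    intro h
    simp only [InnerProductSpace.toDual_apply_apply, ContinuousLinearMap.add_apply,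
      ContinuousLinearMap.smul_apply, ContinuousLinearMap.comp_apply,
      ContinuousLinearMap.prod_apply, fderivInnerCLM_apply, ContinuousLinearMap.id_apply,
      smul_eq_mul]
    rw [hf x, hs x, hmul x, hAx x, real_inner_self_eq_norm_sq]
    simp only [inner_sub_left, inner_sub_right, inner_add_left, real_inner_smul_left, hadj]
    rw [real_inner_comm (A h) (A x), real_inner_comm (A h) y, real_inner_comm h x,
      real_inner_comm h z]
    generalize (inner ℝ (A x) (A h) : ℝ) = a
    generalize (inner ℝ y (A h) : ℝ) = b
    generalize (inner ℝ x h : ℝ) = p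
    generalize (inner ℝ z h : ℝ) = q
    generalize ‖A x - y‖ ^ 2 = Q
    generalize hR : r x = R
    have hRne : R ≠ 0 := hR ▸ hrne x
    field_simp
    ring
  refine ⟨fun x => (key x).gradient, fun x => ?_⟩
  rw [(key x).gradient, smul_eq_zero]
  have : (2 : ℝ) / r x ≠ 0 := div_ne_zero two_ne_zero (hrne x)
  simp [this]
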